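/- Suppose for each string τ ∈ ℕ^{<ω} we have a finite set H_τ ⊆ ℕ satisfying: for all τ and i, i ∈ H_τ ⟺ |H_{τ⌢i}| is odd. Then the map g(F,τ) = (F △ H_τ, τ) is an automorphism of the structure with relations W_σ, E_i, P as defined. -/

import Mathlib

open scoped symmDiff

/-- `W σ` singles out the elements whose string coordinate is `σ`. -/
def Wrel (σ : List ℕ) (x : Finset ℕ × List ℕ) : Prop := σ = x.2

/-- `E i` holds between elements with the same string coordinate whose first
coordinates have symmetric difference `{i}`. -/
def Erel (i : ℕ) (x y : Finset ℕ × List ℕ) : Prop :=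
  x.2 = y.2 ∧ x.1 ∆ y.1 = {i}

/-- The parity relation `P`. -/
def Prel (x y : Finset ℕ × List ℕ) : Prop :=
  ∃ i : ℕ, y.2 = x.2 ++ [i] ∧
    ((i ∉ x.1 ∧ Even y.1.card) ∨ (i ∈ x.1 ∧ Odd y.1.card))

lemma odd_card_symmDiff (A B : Finset ℕ) :
    Odd (A ∆ B).card ↔ ¬ (Odd A.card ↔ Odd B.card) := by
  have h1 : (A ∆ B).card = (A \ B).card + (B \ A).card := by
    rw [symmDiff_def, Finset.sup_eq_union,
      Finset.card_union_of_disjoint disjoint_sdiff_sdiff]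
  have h2 : A.card = (A \ B).card + (A ∩ B).card := (Finset.card_sdiff_add_card_inter A B).symm
  have h3 : B.card = (B \ A).card + (A ∩ B).card := by
    rw [Finset.inter_comm]; exact (Finset.card_sdiff_add_card_inter B A).symm
  simp only [Nat.odd_iff] at *
  omega

lemma cond_iff {i n : ℕ} {A : Finset ℕ} :
    ((i ∉ A ∧ Even n) ∨ (i ∈ A ∧ Odd n)) ↔ (i ∈ A ↔ Odd n) := by
  rw [← Nat.not_odd_iff_even]; tauto

lemma key_symmDiff (A B C : Finset ℕ) : (A ∆ C) ∆ (B ∆ C) = A ∆ B := by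
  rw [symmDiff_symmDiff_symmDiff_comm, symmDiff_self, symmDiff_bot]

theorem stmt_12 (H : List ℕ → Finset ℕ)
    (hpar : ∀ (τ : List ℕ) (i : ℕ), i ∈ H τ ↔ Odd (H (τ ++ [i])).card)
    (g : Finset ℕ × List ℕ → Finset ℕ × List ℕ)
    (hg : ∀ x, g x = (x.1 ∆ H x.2, x.2)) :
    Function.Bijective g ∧
    (∀ (σ : List ℕ) (x), Wrel σ x ↔ Wrel σ (g x)) ∧
    (∀ (i : ℕ) (x y), Erel i x y ↔ Erel i (g x) (g y)) ∧
    (∀ x y, Prel x y ↔ Prel (g x) (g y)) := by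
  have hgg : Function.Involutive g := by
    intro x
    rw [hg, hg]
    simp [symmDiff_symmDiff_cancel_right]
  refine ⟨hgg.bijective, ?_, ?_, ?_⟩
  · intro σ x; simp [Wrel, hg]
  · intro i x y
    simp only [Erel, hg]
    constructor
    · rintro ⟨h2, h1⟩
      refine ⟨h2, ?_⟩
      rw [h2, key_symmDiff, h1]
    · rintro ⟨h2, h1⟩
      rw [h2, key_symmDiff] at h1
      exact ⟨h2, h1⟩
  · intro x y
    simp only [Prel, hg]
    constructor <;> rintro ⟨i, hi, hc⟩ <;> refine ⟨i, hi, ?_⟩ <;>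
      rw [cond_iff] at hc ⊢ <;> rw [hi] at * <;>
      [rw [Finset.mem_symmDiff, odd_card_symmDiff];
       rw [Finset.mem_symmDiff, odd_card_symmDiff] at hc] <;>
      have h1 := hpar x.2 i <;> tauto
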